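/- Let d ∈ (0, 1) and let A ⊂ ℝ be a compact set whose d-occupation measure m_A exists. Let I ⊆ ℝ be an open interval containing A and let φ : I → ℝ be a C¹ map with φ'(x) > 0 for all x ∈ I. Then the d-occupation measure m_{φ(A)} of the compact set φ(A) exists and equals |(φ^{−1})'|^{−d} · (φ_* m_A), i.e. the measure with density w ↦ (φ'(φ^{−1}(w)))^d with respect to the pushforward measure φ_* m_A. -/

import Mathlib

open MeasureTheory

/-- `r^(d-1)` times Lebesgue measure on `ℝ` restricted to the closed `r`-neighborhood
`A_r = {z : |z - x| ≤ r for some x ∈ A}` of `A`. -/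
noncomputable def occApprox1 (A : Set ℝ) (d r : ℝ) : Measure ℝ :=
  ENNReal.ofReal (r ^ (d - 1)) • (volume.restrict (Metric.cthickening r A))

/-- `m` is the `d`-occupation measure of `A ⊆ ℝ`: `m` has finite and strictly positive total
mass, and the measures `r^(d-1) · Leb|_{A_r}` converge weakly to `m` as `r → 0⁺`. -/
def IsOccupationMeasure1 (A : Set ℝ) (d : ℝ) (m : Measure ℝ) : Prop :=
  m Set.univ ≠ 0 ∧ m Set.univ ≠ ⊤ ∧
  ∀ f : BoundedContinuousFunction ℝ ℝ,
    Filter.Tendsto (fun r : ℝ => ∫ z, f z ∂(occApprox1 A d r))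
      (nhdsWithin 0 (Set.Ioi 0)) (nhds (∫ z, f z ∂m))


open Metric Set Filter

noncomputable def ramp (t : ℝ) : ℝ := max 0 t
noncomputable def hat (t : ℝ) : ℝ := max 0 (1 - |t|)

lemma hat_nonneg (t : ℝ) : 0 ≤ hat t := le_max_left _ _

lemma hat_ne_zero {t : ℝ} (h : hat t ≠ 0) : |t| < 1 := by
  by_contra hc
  push_neg at hc
  exact h (max_eq_left (by linarith))

lemma hat_le_one (t : ℝ) : hat t ≤ 1 :=
  max_le zero_le_one (by linarith [abs_nonneg t])

lemma hat_continuous : Continuous hat :=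
  continuous_const.max (continuous_const.sub continuous_abs)

lemma ramp_sub_ramp_le (a b : ℝ) : ramp (a + 1) - ramp a ≤ 1 := by
  unfold ramp
  rcases le_total a 0 with h | h
  · rcases le_total (a+1) 0 with h1 | h1
    · rw [max_eq_left h, max_eq_left h1]; norm_num
    · rw [max_eq_left h, max_eq_right h1]; linarith
  · rw [max_eq_right h, max_eq_right (by linarith)]; linarith

lemma ramp_mono : Monotone ramp := fun a b hab => max_le_max le_rfl hab

lemma hat_eq (t : ℝ) : hat t = (ramp (t + 1) - ramp t) - (ramp t - ramp (t - 1)) := by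
  unfold hat ramp
  rcases le_total t (-1) with h1 | h1
  · rw [abs_of_nonpos (by linarith : t ≤ 0), max_eq_left (by linarith : 1 - -t ≤ 0),
      max_eq_left (by linarith : t + 1 ≤ 0), max_eq_left (by linarith : t ≤ 0),
      max_eq_left (by linarith : t - 1 ≤ 0)]
    ring
  · rcases le_total t 0 with h2 | h2
    · rw [abs_of_nonpos h2, max_eq_right (by linarith : 0 ≤ 1 - -t),
        max_eq_right (by linarith : 0 ≤ t + 1), max_eq_left h2,
        max_eq_left (by linarith : t - 1 ≤ 0)]
      ring
    · rcases le_total t 1 with h3 | h3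
      · rw [abs_of_nonneg h2, max_eq_right (by linarith : 0 ≤ 1 - t),
          max_eq_right (by linarith : 0 ≤ t + 1), max_eq_right h2,
          max_eq_left (by linarith : t - 1 ≤ 0)]
        ring
      · rw [abs_of_nonneg h2, max_eq_left (by linarith : 1 - t ≤ 0),
          max_eq_right (by linarith : 0 ≤ t + 1), max_eq_right h2,
          max_eq_right (by linarith : 0 ≤ t - 1)]
        ring

lemma hat_sum_formula (N : ℕ) (u : ℝ) :
    ∑ k ∈ Finset.range (N + 1), hat (u - k) =
      (ramp (u + 1) - ramp u) - (ramp (u - N) - ramp (u - N - 1)) := by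
  have : ∀ k ∈ Finset.range (N + 1), hat (u - k) =
      (fun k : ℕ => ramp (u - k + 1) - ramp (u - k)) k -
      (fun k : ℕ => ramp (u - k + 1) - ramp (u - k)) (k + 1) := by
    intro k _
    rw [hat_eq (u - k)]
    push_cast
    ring_nf
  rw [Finset.sum_congr rfl this, Finset.sum_range_sub' (fun k : ℕ => ramp (u - k + 1) - ramp (u - k)) (N + 1)]
  push_cast
  ring_nf

lemma hat_sum_le_one (N : ℕ) (u : ℝ) : ∑ k ∈ Finset.range (N + 1), hat (u - k) ≤ 1 := by
  rw [hat_sum_formula]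
  have h1 := ramp_sub_ramp_le u 0
  have h2 : ramp (u - N - 1) ≤ ramp (u - N) := ramp_mono (by linarith)
  have := ramp_sub_ramp_le u u
  linarith [ramp_sub_ramp_le u u]

lemma hat_sum_eq_one (N : ℕ) (u : ℝ) (h0 : 0 ≤ u) (hN : u ≤ N) :
    ∑ k ∈ Finset.range (N + 1), hat (u - k) = 1 := by
  rw [hat_sum_formula]
  rw [ramp, ramp, ramp, ramp, max_eq_right (by linarith), max_eq_right h0,
    max_eq_left (by linarith), max_eq_left (by linarith)]
  ring


/-- bounded continuous functions are integrable w.r.t. finite measures -/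
lemma integrable_of_bdd {g : ℝ → ℝ} (μ : Measure ℝ) [IsFiniteMeasure μ]
    (hg : Continuous g) (C : ℝ) (hC : ∀ x, |g x| ≤ C) : Integrable g μ :=
  (integrable_const C).mono' hg.aestronglyMeasurable
    (ae_of_all _ fun x => by simpa [Real.norm_eq_abs] using hC x)

/-- comparison of set integrals of a nonneg function when `s ∩ {g ≠ 0} ⊆ t` -/
lemma setIntegral_le_of_subset {g : ℝ → ℝ} (hg0 : 0 ≤ g) {s t : Set ℝ}
    (hs : MeasurableSet s) (ht : MeasurableSet t)
    (hsub : ∀ x ∈ s, g x ≠ 0 → x ∈ t)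
    (hsi : IntegrableOn g s volume) (hti : IntegrableOn g t volume) :
    ∫ x in s, g x ≤ ∫ x in t, g x := by
  rw [← integral_indicator hs, ← integral_indicator ht]
  refine integral_mono ((integrable_indicator_iff hs).2 hsi)
    ((integrable_indicator_iff ht).2 hti) ?_
  intro x
  by_cases hxs : x ∈ s
  · by_cases hgz : g x = 0
    · by_cases hxt : x ∈ t <;> simp only [indicator, hxs, hxt, if_true, if_false, hgz] <;> simp
    · have hxt : x ∈ t := hsub x hxs hgz
      simp [indicator, hxs, hxt]
  · by_cases hxt : x ∈ t <;> simp only [indicator, hxs, hxt, if_true, if_false] <;> first | exact hg0 x | exact le_refl _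

/-- The occupation measure gives no mass outside any `cthickening η A`. -/
lemma occ_null {A : Set ℝ} (hA : IsCompact A) (hne : A.Nonempty) {d : ℝ} {mA : Measure ℝ}
    (hmA : IsOccupationMeasure1 A d mA) {η : ℝ} (hη : 0 < η) :
    mA ((Metric.cthickening η A)ᶜ) = 0 := by
  obtain ⟨hm0, hmT, hconv⟩ := hmA
  haveI : IsFiniteMeasure mA := ⟨lt_top_iff_ne_top.2 hmT⟩
  set g : ℝ → ℝ := fun x => max 0 (min 1 ((2 / η) * (infDist x A - η / 2))) with hgdef
  have hgc : Continuous g := by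
    apply continuous_const.max
    apply continuous_const.min
    exact continuous_const.mul ((continuous_infDist_pt A).sub continuous_const)
  have hg0 : ∀ x, 0 ≤ g x := fun x => le_max_left _ _
  have hg1 : ∀ x, |g x| ≤ 1 := by
    intro x
    rw [abs_of_nonneg (hg0 x)]
    exact max_le (by norm_num) (min_le_left _ _)
  set gb : BoundedContinuousFunction ℝ ℝ :=
    BoundedContinuousFunction.ofNormedAddCommGroup g hgc 1
      (fun x => by simpa [Real.norm_eq_abs] using hg1 x) with hgb
  have hgbcoe : ∀ x, gb x = g x := fun x => rfl
  -- approximants vanish for small r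
  have hev : ∀ᶠ r in nhdsWithin (0:ℝ) (Set.Ioi 0),
      (∫ z, gb z ∂(occApprox1 A d r)) = 0 := by
    filter_upwards [Ioc_mem_nhdsGT_of_mem (⟨le_refl (0:ℝ), half_pos hη⟩ : (0:ℝ) ∈ Ico 0 (η/2))]
      with r hr
    have hzero : ∀ x ∈ Metric.cthickening r A, gb x = 0 := by
      intro x hx
      have hle : infDist x A ≤ η / 2 := by
        have h1 : x ∈ Metric.cthickening (η/2) A :=
          Metric.cthickening_mono hr.2 A hx
        rw [Metric.mem_cthickening_iff] at h1
        rw [Metric.infDist]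
        calc (EMetric.infEdist x A).toReal ≤ (ENNReal.ofReal (η/2)).toReal :=
              ENNReal.toReal_mono ENNReal.ofReal_ne_top h1
          _ = η / 2 := ENNReal.toReal_ofReal (by linarith)
      show g x = 0
      rw [hgdef]
      have : (2 / η) * (infDist x A - η / 2) ≤ 0 := by
        apply mul_nonpos_of_nonneg_of_nonpos (by positivity)
        linarith
      have : min 1 ((2 / η) * (infDist x A - η / 2)) ≤ 0 := le_trans (min_le_right _ _) this
      simp [max_eq_left this]
    unfold occApprox1
    rw [integral_smul_measure]
    rw [setIntegral_congr_fun Metric.isClosed_cthickening.measurableSet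
      (fun x hx => hzero x hx)]
    simp
  have hlim0 : (∫ z, gb z ∂mA) = 0 := by
    have h1 := hconv gb
    have h2 : Filter.Tendsto (fun r : ℝ => ∫ z, gb z ∂(occApprox1 A d r))
        (nhdsWithin 0 (Set.Ioi 0)) (nhds 0) := by
      rw [Filter.tendsto_congr' hev]
      exact tendsto_const_nhds
    exact tendsto_nhds_unique h1 h2
  have hae : ∀ᵐ x ∂mA, g x = 0 := by
    have h3 : g =ᶠ[ae mA] 0 :=
      (integral_eq_zero_iff_of_nonneg hg0 (integrable_of_bdd mA hgc 1 hg1)).1 hlim0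
    exact h3
  have hnull : mA {x | g x ≠ 0} = 0 := by simpa [ae_iff] using hae
  refine measure_mono_null ?_ hnull
  intro x hx
  simp only [mem_compl_iff] at hx
  rw [Metric.mem_cthickening_iff, not_le] at hx
  have hlt : η < infDist x A := by
    rw [Metric.infDist]
    have hnetop : EMetric.infEdist x A ≠ ⊤ := Metric.infEdist_ne_top hne
    have : (ENNReal.ofReal η).toReal < (EMetric.infEdist x A).toReal :=
      (ENNReal.toReal_lt_toReal ENNReal.ofReal_ne_top hnetop).2 hx
    rwa [ENNReal.toReal_ofReal hη.le] at this
  show g x ≠ 0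
  have h2 : (1:ℝ) ≤ (2 / η) * (infDist x A - η / 2) := by
    rw [← sub_nonneg]
    have heq : (2/η) * (infDist x A - η/2) - 1 = (2/η) * (infDist x A - η) := by
      field_simp
      ring
    rw [heq]
    apply mul_nonneg (by positivity)
    linarith
  have hgx : g x = 1 := by
    rw [hgdef]
    simp only []
    rw [min_eq_left h2, max_eq_right (by norm_num)]
  rw [hgx]; norm_num

set_option maxHeartbeats 2000000 in
/-- One-dimensional coordinate change for occupation measures: if the compact `A ⊆ ℝ` has a
`d`-occupation measure `m_A` with `d ∈ (0,1)`, and `φ` is `C¹` with strictly positive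
derivative on an open interval `I ⊇ A`, then `φ(A)` has a `d`-occupation measure, namely the
measure with density `w ↦ (φ'(φ⁻¹(w)))^d` with respect to the pushforward `φ_* m_A`. -/
theorem occupationMeasure1_coordinate_change
    (d : ℝ) (hd : d ∈ Set.Ioo (0 : ℝ) 1)
    (A : Set ℝ) (hA : IsCompact A)
    (mA : Measure ℝ) (hmA : IsOccupationMeasure1 A d mA)
    (I : Set ℝ) (hIopen : IsOpen I) (hIinterval : I.OrdConnected) (hAI : A ⊆ I)
    (φ : ℝ → ℝ) (hφ : ContDiffOn ℝ 1 φ I) (hφ' : ∀ x ∈ I, 0 < deriv φ x) :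
    IsOccupationMeasure1 (φ '' A) d
      ((Measure.map φ mA).withDensity
        (fun w => ENNReal.ofReal ((deriv φ (Function.invFunOn φ I w)) ^ d))) := by
  obtain ⟨hd0, hd1⟩ := hd
  obtain ⟨hm0, hmT, hconv⟩ := hmA
  haveI : IsFiniteMeasure mA := ⟨lt_top_iff_ne_top.2 hmT⟩
  -- A is nonempty
  have hAne : A.Nonempty := by
    by_contra hne
    rw [Set.not_nonempty_iff_eq_empty] at hne
    subst hne
    have h1 := hconv 1
    have h2 : Filter.Tendsto (fun r : ℝ => ∫ z, (1 : BoundedContinuousFunction ℝ ℝ) z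
        ∂(occApprox1 (∅ : Set ℝ) d r)) (nhdsWithin 0 (Set.Ioi 0)) (nhds 0) := by
      have : ∀ r : ℝ, (∫ z, (1 : BoundedContinuousFunction ℝ ℝ) z
          ∂(occApprox1 (∅ : Set ℝ) d r)) = 0 := by
        intro r
        unfold occApprox1
        rw [Metric.cthickening_empty, Measure.restrict_empty]
        simp
      rw [funext this]
      exact tendsto_const_nhds
    have h3 := tendsto_nhds_unique h1 h2
    have h4 : (∫ z, (1 : BoundedContinuousFunction ℝ ℝ) z ∂mA) = (mA Set.univ).toReal := by
      simp [BoundedContinuousFunction.coe_one]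
      rfl
    rw [h4] at h3
    exact hm0 (by
      have := ENNReal.toReal_eq_zero_iff (mA Set.univ) |>.1 h3
      tauto)
  -- basic interval setup
  set a0 := sInf A with ha0def
  set a1 := sSup A with ha1def
  have ha0 : a0 ∈ A := hA.sInf_mem hAne
  have ha1 : a1 ∈ A := hA.sSup_mem hAne
  have hbddb := hA.bddBelow
  have hbdda := hA.bddAbove
  have hlb : ∀ a ∈ A, a0 ≤ a := fun a ha => csInf_le hbddb ha
  have hub : ∀ a ∈ A, a ≤ a1 := fun a ha => le_csSup hbdda ha
  have ha01 : a0 ≤ a1 := hlb a1 ha1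
  have hIccI : Icc a0 a1 ⊆ I := hIinterval.out (hAI ha0) (hAI ha1)
  obtain ⟨δ, hδ, hδI⟩ := isCompact_Icc.exists_cthickening_subset_open hIopen hIccI
  set lo := a0 - δ with hlodef
  set hi := a1 + δ with hhidef
  have hlohi : lo < hi := by simp only [hlodef, hhidef]; linarith
  have hKcI : Icc lo hi ⊆ I := by
    intro x hx
    apply hδI
    have hy : max a0 (min x a1) ∈ Icc a0 a1 := by
      constructor
      · exact le_max_left _ _
      · exact max_le ha01 (min_le_right _ _)
    apply Metric.mem_cthickening_of_dist_le x _ δ _ hy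
    rw [Real.dist_eq]
    rcases hx with ⟨hx1, hx2⟩
    rw [abs_le]
    constructor
    · rcases le_total x a1 with h | h
      · rw [min_eq_left h]
        rcases le_total a0 x with h2 | h2
        · rw [max_eq_right h2]; linarith
        · rw [max_eq_left h2]; simp only [hlodef] at hx1; linarith
      · rw [min_eq_right h, max_eq_right ha01]; simp only [hhidef] at hx2; linarith
    · rcases le_total x a1 with h | h
      · rw [min_eq_left h]
        rcases le_total a0 x with h2 | h2
        · rw [max_eq_right h2]; linarith
        · rw [max_eq_left h2]; linarith
      · rw [min_eq_right h, max_eq_right ha01]; linarith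
  -- membership in cthickening of A
  have hmemA : ∀ {s : ℝ} {x : ℝ}, 0 ≤ s →
      (x ∈ Metric.cthickening s A ↔ ∃ a ∈ A, |x - a| ≤ s) := by
    intro s x hs
    rw [hA.cthickening_eq_biUnion_closedBall hs]
    simp only [Set.mem_iUnion, Metric.mem_closedBall, Real.dist_eq]
    tauto
  have hsubKc : ∀ {s : ℝ}, 0 ≤ s → s ≤ δ → Metric.cthickening s A ⊆ Icc lo hi := by
    intro s hs hsδ x hx
    obtain ⟨a, haA, hd2⟩ := (hmemA hs).1 hx
    rw [abs_le] at hd2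
    have h1 := hlb a haA
    have h2 := hub a haA
    constructor
    · simp only [hlodef]; linarith
    · simp only [hhidef]; linarith
  -- derivative facts
  have hder : ∀ x ∈ I, HasDerivAt φ (deriv φ x) x := by
    intro x hx
    exact (((hφ.differentiableOn one_ne_zero).differentiableAt
      (hIopen.mem_nhds hx))).hasDerivAt
  have hcd : ContinuousOn (deriv φ) I := hφ.continuousOn_deriv_of_isOpen hIopen le_rfl
  have hKcne : (Icc lo hi).Nonempty := ⟨lo, le_refl lo, hlohi.le⟩
  obtain ⟨xm, hxm, hxmin⟩ := isCompact_Icc.exists_isMinOn hKcne (hcd.mono hKcI)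
  obtain ⟨xM, hxM, hxmax⟩ := isCompact_Icc.exists_isMaxOn hKcne (hcd.mono hKcI)
  set mm := deriv φ xm with hmmdef
  set MM := deriv φ xM with hMMdef
  have hmm : 0 < mm := hφ' xm (hKcI hxm)
  have hmmle : ∀ x ∈ Icc lo hi, mm ≤ deriv φ x := fun x hx => hxmin hx
  have hMMle : ∀ x ∈ Icc lo hi, deriv φ x ≤ MM := fun x hx => hxmax hx
  have hmMM : mm ≤ MM := le_trans (hmmle xM hxM) le_rfl
  have hMM : 0 < MM := lt_of_lt_of_le hmm hmMM
  -- clamp, p, Φ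
  set clamp : ℝ → ℝ := fun x => max lo (min x hi) with hclampdef
  have hclamp_mem : ∀ x, clamp x ∈ Icc lo hi := by
    intro x
    constructor
    · exact le_max_left _ _
    · exact max_le hlohi.le (min_le_right _ _)
  have hclamp_eq : ∀ x ∈ Icc lo hi, clamp x = x := by
    intro x hx
    simp only [hclampdef]
    rw [min_eq_left hx.2, max_eq_right hx.1]
  have hclamp_cont : Continuous clamp := continuous_const.max (continuous_id.min continuous_const)
  have hclamp_lip : ∀ x y, |clamp x - clamp y| ≤ |x - y| := by
    intro x y
    simp only [hclampdef]
    calc |max lo (min x hi) - max lo (min y hi)|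
        = |min x hi ⊔ lo - min y hi ⊔ lo| := by rw [max_comm lo, max_comm lo]
      _ ≤ |min x hi - min y hi| := abs_max_sub_max_le_abs _ _ _
      _ = |x ⊓ hi - y ⊓ hi| := rfl
      _ ≤ max |x - y| |hi - hi| := abs_min_sub_min_le_max _ _ _ _
      _ = |x - y| := by rw [sub_self, abs_zero]; exact max_eq_left (abs_nonneg _)
  set p : ℝ → ℝ := fun x => deriv φ (clamp x) with hpdef
  set Φ : ℝ → ℝ := fun x => φ (clamp x) with hΦdef
  have hp_cont : Continuous p :=
    hcd.comp_continuous hclamp_cont (fun x => hKcI (hclamp_mem x))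
  have hΦ_cont : Continuous Φ :=
    hφ.continuousOn.comp_continuous hclamp_cont (fun x => hKcI (hclamp_mem x))
  have hpm : ∀ x, mm ≤ p x := fun x => hmmle _ (hclamp_mem x)
  have hpM : ∀ x, p x ≤ MM := fun x => hMMle _ (hclamp_mem x)
  have hp_pos : ∀ x, 0 < p x := fun x => lt_of_lt_of_le hmm (hpm x)
  have hpeq : ∀ x ∈ Icc lo hi, p x = deriv φ x := by
    intro x hx; simp only [hpdef]; rw [hclamp_eq x hx]
  have hΦeq : ∀ x ∈ Icc lo hi, Φ x = φ x := by
    intro x hx; simp only [hΦdef]; rw [hclamp_eq x hx]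
  -- strict monotonicity
  have hmono : StrictMonoOn φ I := by
    apply strictMonoOn_of_deriv_pos ((convex_iff_ordConnected).2 hIinterval) hφ.continuousOn
    rw [hIopen.interior_eq]
    exact hφ'
  have hinj : Set.InjOn φ I := hmono.injOn
  -- mean value theorem
  have hmvt : ∀ x ∈ Icc lo hi, ∀ y ∈ Icc lo hi, x ≤ y →
      ∃ ξ, ξ ∈ Icc x y ∧ φ y - φ x = deriv φ ξ * (y - x) := by
    intro x hx y hy hxy
    rcases eq_or_lt_of_le hxy with rfl | hlt
    · exact ⟨x, ⟨le_refl x, le_refl x⟩, by ring⟩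
    · have hIccsub : Icc x y ⊆ Icc lo hi := Icc_subset_Icc hx.1 hy.2
      obtain ⟨c, hc, hceq⟩ := exists_hasDerivAt_eq_slope φ (deriv φ) hlt
        (hφ.continuousOn.mono (hIccsub.trans hKcI))
        (fun t ht => hder t (hKcI (hIccsub (Ioo_subset_Icc_self ht))))
      refine ⟨c, Ioo_subset_Icc_self hc, ?_⟩
      rw [hceq, div_mul_cancel₀ _ (sub_ne_zero.2 (ne_of_gt hlt))]
  -- mA gives no mass outside Icc lo hi
  have hnullKc : mA ((Icc lo hi)ᶜ) = 0 := by
    have h1 : mA ((Metric.cthickening δ A)ᶜ) = 0 :=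
      occ_null hA hAne ⟨hm0, hmT, hconv⟩ hδ
    exact measure_mono_null
      (Set.compl_subset_compl.2 (hsubKc hδ.le le_rfl)) h1
  have haeKc : ∀ᵐ x ∂mA, x ∈ Icc lo hi := by
    rw [ae_iff]
    have : {x | ¬ x ∈ Icc lo hi} = (Icc lo hi)ᶜ := rfl
    rw [this]
    exact hnullKc
  -- measurable monotone inverse
  set ψ : ℝ → ℝ := fun w => sSup ({lo} ∪ {x | x ∈ Icc lo hi ∧ φ x ≤ w}) with hψdef
  have hbdd : ∀ w : ℝ, BddAbove ({lo} ∪ {x | x ∈ Icc lo hi ∧ φ x ≤ w}) := by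
    intro w
    refine ⟨hi, ?_⟩
    rintro x (rfl | ⟨hx, _⟩)
    · exact hlohi.le
    · exact hx.2
  have hψmono : Monotone ψ := by
    intro w1 w2 h12
    apply csSup_le_csSup (hbdd w2) ⟨lo, Or.inl rfl⟩
    rintro x (rfl | ⟨hx, hle⟩)
    · exact Or.inl rfl
    · exact Or.inr ⟨hx, hle.trans h12⟩
  have hψval : ∀ x ∈ Icc lo hi, ψ (φ x) = x := by
    intro x hx
    have hset : ({lo} ∪ {y | y ∈ Icc lo hi ∧ φ y ≤ φ x}) = Icc lo x := by
      ext y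
      constructor
      · rintro (rfl | ⟨hy, hle⟩)
        · exact ⟨le_rfl, hx.1⟩
        · exact ⟨hy.1, (hmono.le_iff_le (hKcI hy) (hKcI hx)).1 hle⟩
      · intro hy
        exact Or.inr ⟨⟨hy.1, hy.2.trans hx.2⟩,
          (hmono.le_iff_le (hKcI ⟨hy.1, hy.2.trans hx.2⟩) (hKcI hx)).2 hy.2⟩
    simp only [hψdef]
    rw [hset, csSup_Icc hx.1]
  have hψmeas : Measurable ψ := hψmono.measurable
  -- the nice density
  set ρ : ℝ → NNReal := fun w => Real.toNNReal (p (ψ w) ^ d) with hρdef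
  have hρ_meas : Measurable ρ := by
    have heq : (fun w => p (ψ w) ^ d) = fun w => Real.exp (Real.log (p (ψ w)) * d) :=
      funext fun w => Real.rpow_def_of_pos (hp_pos _) d
    simp only [hρdef]
    apply Measurable.real_toNNReal
    rw [heq]
    exact Real.measurable_exp.comp
      ((Real.measurable_log.comp (hp_cont.measurable.comp hψmeas)).mul measurable_const)
  set dens : ℝ → ENNReal :=
    fun w => ENNReal.ofReal ((deriv φ (Function.invFunOn φ I w)) ^ d) with hdensdef
  have hΦmeas : Measurable Φ := hΦ_cont.measurable
  have hφΦae : φ =ᶠ[ae mA] Φ := by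
    filter_upwards [haeKc] with x hx
    rw [hΦeq x hx]
  have hmap : Measure.map φ mA = Measure.map Φ mA := Measure.map_congr hφΦae
  have hφKcim : IsCompact (φ '' Icc lo hi) :=
    isCompact_Icc.image_of_continuousOn (hφ.continuousOn.mono hKcI)
  have himmeas : MeasurableSet (φ '' Icc lo hi) := hφKcim.isClosed.measurableSet
  have haeim : ∀ᵐ w ∂(Measure.map Φ mA), w ∈ φ '' Icc lo hi := by
    rw [ae_iff]
    have h1 : {w | ¬ w ∈ φ '' Icc lo hi} = (φ '' Icc lo hi)ᶜ := rfl
    rw [h1, Measure.map_apply hΦmeas himmeas.compl]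
    apply measure_mono_null ?_ hnullKc
    intro x hx
    simp only [Set.mem_preimage, Set.mem_compl_iff] at hx ⊢
    intro hxIcc
    exact hx ⟨x, hxIcc, (hΦeq x hxIcc).symm⟩
  have hdens_ae : dens =ᶠ[ae (Measure.map Φ mA)] (fun w => ((ρ w : NNReal) : ENNReal)) := by
    filter_upwards [haeim] with w hw
    obtain ⟨x, hx, rfl⟩ := hw
    have hex : ∃ a ∈ I, φ a = φ x := ⟨x, hKcI hx, rfl⟩
    have h1 : φ (Function.invFunOn φ I (φ x)) = φ x := Function.invFunOn_eq hex
    have h2 : Function.invFunOn φ I (φ x) ∈ I := Function.invFunOn_mem hex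
    have h3 : Function.invFunOn φ I (φ x) = x := hinj h2 (hKcI hx) h1
    simp only [hdensdef, hρdef]
    rw [h3, hψval x hx, ← hpeq x hx]
    rw [ENNReal.ofReal_eq_coe_nnreal (Real.rpow_nonneg (hp_pos x).le d)]
    congr 1
    ext
    simp [Real.coe_toNNReal _ (Real.rpow_nonneg (hp_pos x).le d)]
  have htarg : (Measure.map φ mA).withDensity dens
      = (Measure.map Φ mA).withDensity (fun w => ((ρ w : NNReal) : ENNReal)) := by
    rw [hmap, withDensity_congr_ae hdens_ae]
  -- representation of integrals against the target measure
  have hrepr : ∀ f : BoundedContinuousFunction ℝ ℝ,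
      ∫ z, f z ∂((Measure.map φ mA).withDensity dens)
        = ∫ x, (p x ^ d) * f (Φ x) ∂mA := by
    intro f
    rw [htarg, integral_withDensity_eq_integral_smul hρ_meas]
    have hsm : AEStronglyMeasurable (fun w => ρ w • (f w : ℝ)) (Measure.map Φ mA) := by
      apply Measurable.aestronglyMeasurable
      have : (fun w => ρ w • (f w : ℝ)) = fun w => ((ρ w : ℝ) * f w) := by
        funext w
        rw [NNReal.smul_def, smul_eq_mul]
      rw [this]
      exact (measurable_coe_nnreal_real.comp hρ_meas).mul f.continuous.measurable
    rw [integral_map hΦmeas.aemeasurable hsm]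
    apply integral_congr_ae
    filter_upwards [haeKc] with x hx
    have h1 : Φ x = φ x := hΦeq x hx
    have h2 : ψ (Φ x) = x := by rw [h1]; exact hψval x hx
    simp only [hρdef]
    rw [h2, NNReal.smul_def, smul_eq_mul,
      Real.coe_toNNReal _ (Real.rpow_nonneg (hp_pos x).le d)]
  -- total mass
  have hmass : ((Measure.map φ mA).withDensity dens) Set.univ
      = ∫⁻ x, ((ρ (Φ x) : NNReal) : ENNReal) ∂mA := by
    rw [htarg, withDensity_apply _ MeasurableSet.univ, Measure.restrict_univ]
    exact lintegral_map (measurable_coe_nnreal_ennreal.comp hρ_meas) hΦmeas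
  have hρcoe : ∀ w, ((ρ w : NNReal) : ENNReal) = ENNReal.ofReal (p (ψ w) ^ d) := by
    intro w
    simp only [hρdef]
    rfl
  have hmass_lb : ENNReal.ofReal (mm ^ d) * mA Set.univ
      ≤ ((Measure.map φ mA).withDensity dens) Set.univ := by
    rw [hmass, ← MeasureTheory.lintegral_const]
    apply lintegral_mono
    intro x
    show ENNReal.ofReal (mm ^ d) ≤ ((ρ (Φ x) : NNReal) : ENNReal)
    rw [hρcoe]
    exact ENNReal.ofReal_le_ofReal
      (Real.rpow_le_rpow hmm.le (hpm _) hd0.le)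
  have hmass_ub : ((Measure.map φ mA).withDensity dens) Set.univ
      ≤ ENNReal.ofReal (MM ^ d) * mA Set.univ := by
    rw [hmass, ← MeasureTheory.lintegral_const]
    apply lintegral_mono
    intro x
    show ((ρ (Φ x) : NNReal) : ENNReal) ≤ ENNReal.ofReal (MM ^ d)
    rw [hρcoe]
    exact ENNReal.ofReal_le_ofReal
      (Real.rpow_le_rpow (hp_pos _).le (hpM _) hd0.le)
  have hmass_ne0 : ((Measure.map φ mA).withDensity dens) Set.univ ≠ 0 := by
    refine ne_of_gt (lt_of_lt_of_le ?_ hmass_lb)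
    apply ENNReal.mul_pos
    · exact ne_of_gt (ENNReal.ofReal_pos.2 (Real.rpow_pos_of_pos hmm d))
    · exact hm0
  have hmass_netop : ((Measure.map φ mA).withDensity dens) Set.univ ≠ ⊤ := by
    refine ne_of_lt (lt_of_le_of_lt hmass_ub ?_)
    exact ENNReal.mul_lt_top ENNReal.ofReal_lt_top (lt_top_iff_ne_top.2 hmT)
  -- image compactness and carriers
  have hφAcomp : IsCompact (φ '' A) := hA.image_of_continuousOn (hφ.continuousOn.mono hAI)
  have hφAne : (φ '' A).Nonempty := hAne.image φ
  have hAKc : A ⊆ Icc lo hi := by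
    intro a ha
    exact ⟨by simp only [hlodef]; linarith [hlb a ha], by simp only [hhidef]; linarith [hub a ha]⟩
  have hmemφA : ∀ {s x : ℝ}, 0 ≤ s →
      (x ∈ Metric.cthickening s (φ '' A) ↔ ∃ a ∈ A, |x - φ a| ≤ s) := by
    intro s x hs
    rw [hφAcomp.cthickening_eq_biUnion_closedBall hs]
    simp only [Set.mem_iUnion, Metric.mem_closedBall, Real.dist_eq]
    constructor
    · rintro ⟨y, ⟨a, haA, rfl⟩, h⟩
      exact ⟨a, haA, h⟩
    · rintro ⟨a, haA, h⟩
      exact ⟨φ a, ⟨a, haA, rfl⟩, h⟩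
  set Br : ℝ → Set ℝ := fun r => Icc lo hi ∩ Φ ⁻¹' (Metric.cthickening r (φ '' A)) with hBrdef
  have hBr_mem : ∀ {r x : ℝ}, 0 ≤ r →
      (x ∈ Br r ↔ x ∈ Icc lo hi ∧ ∃ a ∈ A, |φ x - φ a| ≤ r) := by
    intro r x hr
    simp only [hBrdef, Set.mem_inter_iff, Set.mem_preimage]
    constructor
    · rintro ⟨hx, hx2⟩
      rw [hΦeq x hx] at hx2
      exact ⟨hx, (hmemφA hr).1 hx2⟩
    · rintro ⟨hx, hex⟩
      refine ⟨hx, ?_⟩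
      rw [hΦeq x hx]
      exact (hmemφA hr).2 hex
  have hBr_closed : ∀ r, IsClosed (Br r) :=
    fun r => isClosed_Icc.inter (Metric.isClosed_cthickening.preimage hΦ_cont)
  have hBr_meas : ∀ r, MeasurableSet (Br r) := fun r => (hBr_closed r).measurableSet
  have hBr_comp : ∀ r, IsCompact (Br r) := fun r =>
    IsCompact.of_isClosed_subset isCompact_Icc (hBr_closed r) Set.inter_subset_left
  -- bi-Lipschitz lower bound on Icc lo hi
  have hbilip : ∀ x ∈ Icc lo hi, ∀ y ∈ Icc lo hi, mm * |x - y| ≤ |φ x - φ y| := by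
    have key : ∀ x ∈ Icc lo hi, ∀ y ∈ Icc lo hi, x ≤ y → mm * |x - y| ≤ |φ x - φ y| := by
      intro x hx y hy hxy
      obtain ⟨ξ, hξ, heq⟩ := hmvt x hx y hy hxy
      have hξKc : ξ ∈ Icc lo hi := ⟨le_trans hx.1 hξ.1, le_trans hξ.2 hy.2⟩
      have h1 : mm * (y - x) ≤ φ y - φ x := by
        rw [heq]
        exact mul_le_mul_of_nonneg_right (hmmle ξ hξKc) (by linarith)
      have h2 : 0 ≤ φ y - φ x := le_trans (mul_nonneg hmm.le (by linarith)) h1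
      rw [abs_sub_comm x y, abs_of_nonneg (by linarith : (0:ℝ) ≤ y - x),
        abs_sub_comm (φ x) (φ y), abs_of_nonneg h2]
      exact h1
    intro x hx y hy
    rcases le_total x y with h | h
    · exact key x hx y hy h
    · rw [abs_sub_comm x y, abs_sub_comm (φ x) (φ y)]
      exact key y hy x hx h
  -- image identity
  have himage : ∀ {r : ℝ}, 0 < r → r ≤ mm * δ →
      Metric.cthickening r (φ '' A) = φ '' (Br r) := by
    intro r hr hrδ
    have ha0Kc : a0 ∈ Icc lo hi := ⟨by simp only [hlodef]; linarith, by simp only [hhidef]; linarith⟩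
    have ha1Kc : a1 ∈ Icc lo hi := ⟨by simp only [hlodef]; linarith, by simp only [hhidef]; linarith⟩
    have hloKc : lo ∈ Icc lo hi := ⟨le_rfl, hlohi.le⟩
    have hhiKc : hi ∈ Icc lo hi := ⟨hlohi.le, le_rfl⟩
    have hlo : φ lo + mm * δ ≤ φ a0 := by
      obtain ⟨ξ, hξ, heq⟩ := hmvt lo hloKc a0 ha0Kc (by simp only [hlodef]; linarith)
      have hξKc : ξ ∈ Icc lo hi := ⟨hξ.1, le_trans hξ.2 ha0Kc.2⟩
      have : mm * δ ≤ φ a0 - φ lo := by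
        rw [heq]
        have h2 : a0 - lo = δ := by simp only [hlodef]; ring
        rw [h2]
        exact mul_le_mul_of_nonneg_right (hmmle ξ hξKc) hδ.le
      linarith
    have hhi : φ a1 + mm * δ ≤ φ hi := by
      obtain ⟨ξ, hξ, heq⟩ := hmvt a1 ha1Kc hi hhiKc (by simp only [hhidef]; linarith)
      have hξKc : ξ ∈ Icc lo hi := ⟨le_trans ha1Kc.1 hξ.1, hξ.2⟩
      have : mm * δ ≤ φ hi - φ a1 := by
        rw [heq]
        have h2 : hi - a1 = δ := by simp only [hhidef]; ring
        rw [h2]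
        exact mul_le_mul_of_nonneg_right (hmmle ξ hξKc) hδ.le
      linarith
    apply Set.Subset.antisymm
    · intro z hz
      obtain ⟨a, haA, hza⟩ := (hmemφA hr.le).1 hz
      have haKc := hAKc haA
      have h0a : φ a0 ≤ φ a := (hmono.le_iff_le (hKcI ha0Kc) (hKcI haKc)).2 (hlb a haA)
      have ha1' : φ a ≤ φ a1 := (hmono.le_iff_le (hKcI haKc) (hKcI ha1Kc)).2 (hub a haA)
      rw [abs_le] at hza
      have hz1 : φ lo ≤ z := by linarith
      have hz2 : z ≤ φ hi := by linarith
      obtain ⟨x, hx, hφx⟩ := intermediate_value_Icc hlohi.le (hφ.continuousOn.mono hKcI) ⟨hz1, hz2⟩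
      refine ⟨x, ?_, hφx⟩
      rw [hBr_mem hr.le]
      exact ⟨hx, a, haA, by rw [hφx]; rw [abs_le]; exact ⟨by linarith, by linarith⟩⟩
    · rintro _ ⟨x, hx, rfl⟩
      obtain ⟨hxKc, a, haA, hxa⟩ := (hBr_mem hr.le).1 hx
      exact (hmemφA hr.le).2 ⟨a, haA, hxa⟩
  -- uniform continuity of p
  have hUC : ∀ ε₁ : ℝ, 0 < ε₁ → ∃ δ' > 0, ∀ x y : ℝ, |x - y| ≤ δ' → |p x - p y| ≤ ε₁ := by
    intro ε₁ hε₁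
    have h1 : UniformContinuousOn (deriv φ) (Icc lo hi) :=
      isCompact_Icc.uniformContinuousOn_of_continuous (hcd.mono hKcI)
    rw [uniformContinuousOn_iff_le] at h1
    obtain ⟨δ', hδ'0, hδ'⟩ := h1 ε₁ hε₁
    refine ⟨δ', hδ'0, fun x y hxy => ?_⟩
    have h2 := hδ' (clamp x) (hclamp_mem x) (clamp y) (hclamp_mem y)
      (by rw [Real.dist_eq]; exact le_trans (hclamp_lip x y) hxy)
    simpa [Real.dist_eq] using h2
  -- scaling limits from the hypothesis
  have hscale : ∀ c : ℝ, 0 < c → ∀ u : BoundedContinuousFunction ℝ ℝ,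
      Tendsto (fun r : ℝ => r ^ (d-1) * ∫ x in Metric.cthickening (r/c) A, u x)
        (nhdsWithin 0 (Set.Ioi 0)) (nhds (c ^ (d-1) * ∫ x, u x ∂mA)) := by
    intro c hc u
    have h1 : Tendsto (fun r : ℝ => r / c) (nhdsWithin 0 (Set.Ioi 0))
        (nhdsWithin 0 (Set.Ioi 0)) := by
      apply tendsto_nhdsWithin_of_tendsto_nhds_of_eventually_within
      · have h2 : Tendsto (fun r : ℝ => r / c) (nhds 0) (nhds (0 / c)) :=
          (continuous_id.div_const c).tendsto 0
        rw [zero_div] at h2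
        exact h2.mono_left nhdsWithin_le_nhds
      · filter_upwards [self_mem_nhdsWithin] with r hr
        exact div_pos hr hc
    have h2 := ((hconv u).comp h1).const_mul (c ^ (d-1))
    apply Tendsto.congr' ?_ h2
    filter_upwards [self_mem_nhdsWithin] with r hr
    show c ^ (d-1) * ((fun s => ∫ z, u z ∂occApprox1 A d s) ((fun r : ℝ => r / c) r))
      = r ^ (d-1) * ∫ x in Metric.cthickening (r/c) A, u x
    simp only []
    unfold occApprox1
    rw [integral_smul_measure,
      ENNReal.toReal_ofReal (Real.rpow_nonneg (div_nonneg (le_of_lt hr) hc.le) _),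
      smul_eq_mul, ← mul_assoc]
    congr 1
    rw [← Real.mul_rpow hc.le (div_nonneg (le_of_lt hr) hc.le)]
    congr 1
    field_simp
  -- THE KEY LIMIT for nonnegative bounded continuous functions
  have hkey : ∀ g : BoundedContinuousFunction ℝ ℝ, (∀ x, 0 ≤ (g x : ℝ)) →
      Tendsto (fun r : ℝ => ∫ z, g z ∂occApprox1 (φ '' A) d r)
        (nhdsWithin 0 (Set.Ioi 0)) (nhds (∫ x, p x ^ d * g (Φ x) ∂mA)) := by
    intro g hg0
    set G : ℝ → ℝ := fun x => p x * g (Φ x) with hGdef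
    have hG_cont : Continuous G := hp_cont.mul (g.continuous.comp hΦ_cont)
    have hG0 : ∀ x, 0 ≤ G x := fun x => mul_nonneg (hp_pos x).le (hg0 _)
    have hgbd : ∀ y : ℝ, |g y| ≤ ‖g‖ := fun y => by
      simpa [Real.norm_eq_abs] using g.norm_coe_le_norm y
    have hGbd : ∀ x, |G x| ≤ MM * ‖g‖ := by
      intro x
      rw [hGdef]
      simp only []
      rw [abs_mul]
      apply mul_le_mul ?_ (hgbd _) (abs_nonneg _) hMM.le
      rw [abs_of_pos (hp_pos x)]
      exact hpM x
    set F : ℝ → ℝ := fun x => p x ^ d * g (Φ x) with hFdef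
    have hFeq : ∀ x, F x = p x ^ (d-1) * G x := by
      intro x
      have hp1 : p x ^ (d-1) * p x = p x ^ d := by
        rw [← Real.rpow_add_one (hp_pos x).ne' (d-1)]
        congr 1
        ring
      simp only [hFdef, hGdef]
      rw [← hp1, mul_assoc]
    have hF_cont : Continuous F :=
      (hp_cont.rpow_const (fun x => Or.inl (hp_pos x).ne')).mul (g.continuous.comp hΦ_cont)
    have hFbd : ∀ x, |F x| ≤ MM ^ d * ‖g‖ := by
      intro x
      rw [hFdef]
      simp only []
      rw [abs_mul]
      apply mul_le_mul ?_ (hgbd _) (abs_nonneg _) (Real.rpow_nonneg hMM.le d)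
      rw [abs_of_pos (Real.rpow_pos_of_pos (hp_pos x) d)]
      exact Real.rpow_le_rpow (hp_pos x).le (hpM x) hd0.le
    have hF_int : Integrable F mA := integrable_of_bdd mA hF_cont _ hFbd
    set T := ∫ x, F x ∂mA with hTdef
    have hT0 : 0 ≤ T :=
      integral_nonneg (fun x => mul_nonneg (Real.rpow_nonneg (hp_pos x).le d) (hg0 _))
    rw [Metric.tendsto_nhds]
    intro ε hε
    have hsel : ∃ ε' : ℝ, 0 < ε' ∧ ε' < mm/2 ∧
        ((1 - 2*ε'/mm) ^ (d-1)) * T ≤ T + ε/4 ∧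
        T - ε/4 ≤ ((1 + 2*ε'/mm) ^ (d-1)) * T := by
      have hc1 : Tendsto (fun u : ℝ => ((1 - 2*u/mm) ^ (d-1)) * T) (nhds 0)
          (nhds T) := by
        have hbase : ContinuousAt (fun u : ℝ => 1 - 2*u/mm) 0 := by fun_prop
        have h3 : ContinuousAt (fun u : ℝ => ((1 - 2*u/mm) ^ (d-1)) * T) 0 :=
          (hbase.rpow_const (Or.inl (by norm_num))).mul continuousAt_const
        have h4 := h3.tendsto
        simpa [Real.one_rpow] using h4
      have hc2 : Tendsto (fun u : ℝ => ((1 + 2*u/mm) ^ (d-1)) * T) (nhds 0)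
          (nhds T) := by
        have hbase : ContinuousAt (fun u : ℝ => 1 + 2*u/mm) 0 := by fun_prop
        have h3 : ContinuousAt (fun u : ℝ => ((1 + 2*u/mm) ^ (d-1)) * T) 0 :=
          (hbase.rpow_const (Or.inl (by norm_num))).mul continuousAt_const
        have h4 := h3.tendsto
        simpa [Real.one_rpow] using h4
      have he1 := (Metric.tendsto_nhds.1 hc1 (ε/4) (by linarith)).filter_mono
        (nhdsWithin_le_nhds (s := Set.Ioi (0:ℝ)))
      have he2 := (Metric.tendsto_nhds.1 hc2 (ε/4) (by linarith)).filter_mono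
        (nhdsWithin_le_nhds (s := Set.Ioi (0:ℝ)))
      have he3 : ∀ᶠ u in nhdsWithin (0:ℝ) (Set.Ioi 0), u ∈ Set.Ioc 0 (mm/4) :=
        Ioc_mem_nhdsGT_of_mem (⟨le_rfl, by linarith⟩ : (0:ℝ) ∈ Ico 0 (mm/4))
      obtain ⟨u, hu1, hu2, hu3⟩ := (he1.and (he2.and he3)).exists
      rw [Real.dist_eq, abs_lt] at hu1 hu2
      exact ⟨u, hu3.1, by linarith [hu3.2], by linarith [hu1.2], by linarith [hu2.1]⟩
    obtain ⟨ε', hε'0, hε'm, hκp, hκm⟩ := hsel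
    obtain ⟨δ', hδ'0, hδ'p⟩ := hUC ε' hε'0
    obtain ⟨N, hN⟩ := exists_nat_gt (2 * (hi - lo) / δ')
    have hNpos : 0 < (N:ℝ) := lt_of_le_of_lt (div_nonneg (by linarith) hδ'0.le) hN
    set Δ := (hi - lo) / N with hΔdef
    have hΔpos : 0 < Δ := div_pos (by linarith) hNpos
    have hΔle : Δ ≤ δ'/2 := by
      rw [hΔdef, div_le_iff₀ hNpos]
      have h2 := (div_lt_iff₀ hδ'0).1 hN
      linarith
    set tj : ℕ → ℝ := fun j => lo + j * Δ with htjdef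
    set cj : ℕ → ℝ := fun j => p (tj j) with hcjdef
    set χ : ℕ → ℝ → ℝ := fun j x => hat ((x - tj j) / Δ) with hχdef
    have hχ0 : ∀ j x, 0 ≤ χ j x := fun j x => hat_nonneg _
    have hχ1 : ∀ j x, χ j x ≤ 1 := fun j x => hat_le_one _
    have hχsupp : ∀ j x, χ j x ≠ 0 → |x - tj j| < Δ := by
      intro j x h
      have h2 := hat_ne_zero h
      rwa [abs_div, abs_of_pos hΔpos, div_lt_one hΔpos] at h2
    have hχcont : ∀ j, Continuous (χ j) := fun j =>
      hat_continuous.comp ((continuous_id.sub continuous_const).div_const Δ)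
    have hχsum_le : ∀ x, ∑ j ∈ Finset.range (N+1), χ j x ≤ 1 := by
      intro x
      have h2 : ∀ j ∈ Finset.range (N+1), χ j x = hat ((x - lo)/Δ - j) := by
        intro j _
        simp only [hχdef, htjdef]
        congr 1
        field_simp
        ring
      rw [Finset.sum_congr rfl h2]
      exact hat_sum_le_one N _
    have hχsum_eq : ∀ x ∈ Icc lo hi, ∑ j ∈ Finset.range (N+1), χ j x = 1 := by
      intro x hx
      have h2 : ∀ j ∈ Finset.range (N+1), χ j x = hat ((x - lo)/Δ - j) := by
        intro j _
        simp only [hχdef, htjdef]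
        congr 1
        field_simp
        ring
      rw [Finset.sum_congr rfl h2]
      apply hat_sum_eq_one
      · exact div_nonneg (by linarith [hx.1]) hΔpos.le
      · rw [div_le_iff₀ hΔpos]
        have h3 : (N:ℝ) * Δ = hi - lo := by
          rw [hΔdef]
          field_simp
        linarith [hx.2]
    have hcjm : ∀ j, mm ≤ cj j := fun j => hpm _
    have hcp : ∀ j x, χ j x ≠ 0 → |p x - cj j| ≤ ε' := by
      intro j x h
      exact hδ'p x (tj j) (le_trans (hχsupp j x h).le (by linarith [hΔle]))
    have hlocal : ∀ (t x a : ℝ), x ∈ Icc lo hi → a ∈ Icc lo hi →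
        |x - t| ≤ δ' → |a - t| ≤ δ' →
        (p t - ε') * |x - a| ≤ |φ x - φ a| ∧ |φ x - φ a| ≤ (p t + ε') * |x - a| := by
      have key : ∀ (t x a : ℝ), x ∈ Icc lo hi → a ∈ Icc lo hi →
          |x - t| ≤ δ' → |a - t| ≤ δ' → x ≤ a →
          (p t - ε') * |x - a| ≤ |φ x - φ a| ∧ |φ x - φ a| ≤ (p t + ε') * |x - a| := by
        intro t x a hx ha hxt hat' hxa
        obtain ⟨ξ, hξ, heq⟩ := hmvt x hx a ha hxa
        have hξKc : ξ ∈ Icc lo hi := ⟨le_trans hx.1 hξ.1, le_trans hξ.2 ha.2⟩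
        have hξt : |ξ - t| ≤ δ' := by
          rw [abs_le] at hxt hat' ⊢
          exact ⟨by linarith [hξ.1, hxt.1], by linarith [hξ.2, hat'.2]⟩
        have hpξ := hδ'p ξ t hξt
        rw [abs_le] at hpξ
        have hdξ : deriv φ ξ = p ξ := (hpeq ξ hξKc).symm
        have habs1 : |x - a| = a - x := by
          rw [abs_sub_comm]
          exact abs_of_nonneg (by linarith)
        have hnn : 0 ≤ φ a - φ x := by
          rw [heq, hdξ]
          exact mul_nonneg (hp_pos ξ).le (by linarith)
        have habs2 : |φ x - φ a| = φ a - φ x := by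
          rw [abs_sub_comm]
          exact abs_of_nonneg hnn
        rw [habs1, habs2, heq, hdξ]
        exact ⟨mul_le_mul_of_nonneg_right (by linarith) (by linarith),
          mul_le_mul_of_nonneg_right (by linarith) (by linarith)⟩
      intro t x a hx ha hxt hat'
      rcases le_total x a with h | h
      · exact key t x a hx ha hxt hat' h
      · obtain ⟨h1, h2⟩ := key t a x ha hx hat' hxt h
        rw [abs_sub_comm a x, abs_sub_comm (φ a) (φ x)] at h1 h2
        exact ⟨h1, h2⟩
    set gj : ℕ → ℝ → ℝ := fun j x => χ j x * G x with hgjdef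
    have hgj_cont : ∀ j, Continuous (gj j) := fun j => (hχcont j).mul hG_cont
    have hgj0 : ∀ j x, 0 ≤ gj j x := fun j x => mul_nonneg (hχ0 j x) (hG0 x)
    have hgjbd : ∀ j x, |gj j x| ≤ MM * ‖g‖ := by
      intro j x
      simp only [hgjdef]
      rw [abs_mul]
      calc |χ j x| * |G x| ≤ 1 * (MM * ‖g‖) := by
            apply mul_le_mul ?_ (hGbd x) (abs_nonneg _) zero_le_one
            rw [abs_of_nonneg (hχ0 j x)]
            exact hχ1 j x
        _ = MM * ‖g‖ := one_mul _
    set gjb : ℕ → BoundedContinuousFunction ℝ ℝ := fun j =>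
      BoundedContinuousFunction.ofNormedAddCommGroup (gj j) (hgj_cont j) (MM * ‖g‖)
        (fun x => by simpa [Real.norm_eq_abs] using hgjbd j x) with hgjbdef
    set Ij : ℕ → ℝ := fun j => ∫ x, gj j x ∂mA with hIjdef
    have hgj_int : ∀ j, Integrable (gj j) mA :=
      fun j => integrable_of_bdd mA (hgj_cont j) _ (hgjbd j)
    have hup : Tendsto (fun r : ℝ => ∑ j ∈ Finset.range (N+1),
          r^(d-1) * ∫ x in Metric.cthickening (r/(cj j - ε')) A, gj j x)
        (nhdsWithin 0 (Set.Ioi 0))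
        (nhds (∑ j ∈ Finset.range (N+1), (cj j - ε')^(d-1) * Ij j)) := by
      apply tendsto_finset_sum
      intro j _
      exact hscale (cj j - ε') (by linarith [hcjm j]) (gjb j)
    have hdn : Tendsto (fun r : ℝ => ∑ j ∈ Finset.range (N+1),
          r^(d-1) * ∫ x in Metric.cthickening (r/(cj j + ε')) A, gj j x)
        (nhdsWithin 0 (Set.Ioi 0))
        (nhds (∑ j ∈ Finset.range (N+1), (cj j + ε')^(d-1) * Ij j)) := by
      apply tendsto_finset_sum
      intro j _
      exact hscale (cj j + ε') (by linarith [hcjm j]) (gjb j)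
    have hκp0 : (0:ℝ) < 1 - 2*ε'/mm := by
      rw [sub_pos, div_lt_one hmm]
      linarith
    have hκm0 : (0:ℝ) < 1 + 2*ε'/mm := by positivity
    have hfac_up : ∀ j x, χ j x ≠ 0 →
        (cj j - ε')^(d-1) ≤ ((1 - 2*ε'/mm) ^ (d-1)) * p x ^ (d-1) := by
      intro j x hz
      have h1 := hcp j x hz
      rw [abs_le] at h1
      have h2 : p x - 2*ε' ≤ cj j - ε' := by linarith [h1.1]
      have h3 : 0 < p x - 2*ε' := by linarith [hpm x, hε'm]
      have h4 : (cj j - ε')^(d-1) ≤ (p x - 2*ε')^(d-1) :=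
        Real.rpow_le_rpow_of_nonpos h3 h2 (by linarith)
      have h6 : 2*ε'/mm * mm ≤ 2*ε'/mm * p x :=
        mul_le_mul_of_nonneg_left (hpm x) (by positivity)
      rw [div_mul_cancel₀ _ (ne_of_gt hmm)] at h6
      have h5 : p x * (1 - 2*ε'/mm) ≤ p x - 2*ε' := by nlinarith
      have h8 : (p x - 2*ε')^(d-1) ≤ (p x * (1 - 2*ε'/mm))^(d-1) :=
        Real.rpow_le_rpow_of_nonpos (mul_pos (hp_pos x) hκp0) h5 (by linarith)
      have h9 : (p x * (1 - 2*ε'/mm))^(d-1)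
          = ((1 - 2*ε'/mm) ^ (d-1)) * p x ^(d-1) := by
        rw [Real.mul_rpow (hp_pos x).le hκp0.le, mul_comm]
      linarith
    have hfac_dn : ∀ j x, χ j x ≠ 0 →
        ((1 + 2*ε'/mm) ^ (d-1)) * p x ^ (d-1) ≤ (cj j + ε')^(d-1) := by
      intro j x hz
      have h1 := hcp j x hz
      rw [abs_le] at h1
      have h2 : cj j + ε' ≤ p x + 2*ε' := by linarith [h1.2]
      have h4 : (p x + 2*ε')^(d-1) ≤ (cj j + ε')^(d-1) :=
        Real.rpow_le_rpow_of_nonpos (by linarith [hcjm j]) h2 (by linarith)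
      have h6 : 2*ε'/mm * mm ≤ 2*ε'/mm * p x :=
        mul_le_mul_of_nonneg_left (hpm x) (by positivity)
      rw [div_mul_cancel₀ _ (ne_of_gt hmm)] at h6
      have h5 : p x + 2*ε' ≤ p x * (1 + 2*ε'/mm) := by nlinarith
      have h8 : (p x * (1 + 2*ε'/mm))^(d-1) ≤ (p x + 2*ε')^(d-1) :=
        Real.rpow_le_rpow_of_nonpos (add_pos (hp_pos x) (by linarith : (0:ℝ) < 2*ε')) h5 (by linarith)
      have h9 : (p x * (1 + 2*ε'/mm))^(d-1)
          = ((1 + 2*ε'/mm) ^ (d-1)) * p x ^(d-1) := by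
        rw [Real.mul_rpow (hp_pos x).le hκm0.le, mul_comm]
      linarith
    have hsum_int : Integrable
        (fun x => ∑ j ∈ Finset.range (N+1), (cj j - ε')^(d-1) * gj j x) mA :=
      integrable_finset_sum _ (fun j _ => (hgj_int j).const_mul _)
    have hsum_int' : Integrable
        (fun x => ∑ j ∈ Finset.range (N+1), (cj j + ε')^(d-1) * gj j x) mA :=
      integrable_finset_sum _ (fun j _ => (hgj_int j).const_mul _)
    have hsum_eqint : ∀ c : ℕ → ℝ,
        (∑ j ∈ Finset.range (N+1), c j * Ij j)
          = ∫ x, ∑ j ∈ Finset.range (N+1), c j * gj j x ∂mA := by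
      intro c
      rw [integral_finset_sum _ (fun j _ => (hgj_int j).const_mul _)]
      apply Finset.sum_congr rfl
      intro j _
      rw [integral_const_mul]
    have hSu : (∑ j ∈ Finset.range (N+1), (cj j - ε')^(d-1) * Ij j) ≤ T + ε/4 := by
      have hpoint : ∀ x, (∑ j ∈ Finset.range (N+1), (cj j - ε')^(d-1) * gj j x)
          ≤ ((1 - 2*ε'/mm) ^ (d-1)) * F x := by
        intro x
        have hterm : ∀ j ∈ Finset.range (N+1),
            (cj j - ε')^(d-1) * gj j x
              ≤ (((1 - 2*ε'/mm) ^ (d-1)) * p x ^ (d-1) * G x) * χ j x := by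
          intro j _
          by_cases hz : χ j x = 0
          · simp only [hgjdef, hz, mul_zero, zero_mul]
            exact le_rfl
          · calc (cj j - ε')^(d-1) * gj j x
                = ((cj j - ε')^(d-1)) * (χ j x * G x) := rfl
              _ ≤ (((1 - 2*ε'/mm) ^ (d-1)) * p x ^ (d-1)) * (χ j x * G x) :=
                  mul_le_mul_of_nonneg_right (hfac_up j x hz)
                    (mul_nonneg (hχ0 j x) (hG0 x))
              _ = (((1 - 2*ε'/mm) ^ (d-1)) * p x ^ (d-1) * G x) * χ j x := by ring
        calc (∑ j ∈ Finset.range (N+1), (cj j - ε')^(d-1) * gj j x)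
            ≤ ∑ j ∈ Finset.range (N+1),
                (((1 - 2*ε'/mm) ^ (d-1)) * p x ^ (d-1) * G x) * χ j x :=
              Finset.sum_le_sum hterm
          _ = (((1 - 2*ε'/mm) ^ (d-1)) * p x ^ (d-1) * G x)
                * ∑ j ∈ Finset.range (N+1), χ j x := by rw [Finset.mul_sum]
          _ ≤ (((1 - 2*ε'/mm) ^ (d-1)) * p x ^ (d-1) * G x) * 1 := by
              apply mul_le_mul_of_nonneg_left (hχsum_le x)
              have := Real.rpow_nonneg hκp0.le (d-1)
              have := Real.rpow_nonneg (hp_pos x).le (d-1)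
              have := hG0 x
              positivity
          _ = ((1 - 2*ε'/mm) ^ (d-1)) * F x := by rw [hFeq x]; ring
      have h2 : ∫ x, (∑ j ∈ Finset.range (N+1), (cj j - ε')^(d-1) * gj j x) ∂mA
          ≤ ∫ x, ((1 - 2*ε'/mm) ^ (d-1)) * F x ∂mA :=
        integral_mono hsum_int (hF_int.const_mul _) hpoint
      rw [← hsum_eqint] at h2
      rw [integral_const_mul] at h2
      exact le_trans h2 hκp
    have hSd : T - ε/4 ≤ (∑ j ∈ Finset.range (N+1), (cj j + ε')^(d-1) * Ij j) := by
      have hpoint : ∀ x ∈ Icc lo hi, ((1 + 2*ε'/mm) ^ (d-1)) * F x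
          ≤ (∑ j ∈ Finset.range (N+1), (cj j + ε')^(d-1) * gj j x) := by
        intro x hx
        have hterm : ∀ j ∈ Finset.range (N+1),
            (((1 + 2*ε'/mm) ^ (d-1)) * p x ^ (d-1) * G x) * χ j x
              ≤ (cj j + ε')^(d-1) * gj j x := by
          intro j _
          by_cases hz : χ j x = 0
          · simp only [hgjdef, hz, mul_zero, zero_mul]
            exact le_rfl
          · calc (((1 + 2*ε'/mm) ^ (d-1)) * p x ^ (d-1) * G x) * χ j x
                = (((1 + 2*ε'/mm) ^ (d-1)) * p x ^ (d-1)) * (χ j x * G x) := by ring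
              _ ≤ ((cj j + ε')^(d-1)) * (χ j x * G x) :=
                  mul_le_mul_of_nonneg_right (hfac_dn j x hz)
                    (mul_nonneg (hχ0 j x) (hG0 x))
              _ = (cj j + ε')^(d-1) * gj j x := rfl
        calc ((1 + 2*ε'/mm) ^ (d-1)) * F x
            = (((1 + 2*ε'/mm) ^ (d-1)) * p x ^ (d-1) * G x)
                * ∑ j ∈ Finset.range (N+1), χ j x := by
              rw [hχsum_eq x hx, mul_one, hFeq x]; ring
          _ = ∑ j ∈ Finset.range (N+1),
                (((1 + 2*ε'/mm) ^ (d-1)) * p x ^ (d-1) * G x) * χ j x := by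
              rw [Finset.mul_sum]
          _ ≤ ∑ j ∈ Finset.range (N+1), (cj j + ε')^(d-1) * gj j x :=
              Finset.sum_le_sum hterm
      have h2 : ∫ x, ((1 + 2*ε'/mm) ^ (d-1)) * F x ∂mA
          ≤ ∫ x, (∑ j ∈ Finset.range (N+1), (cj j + ε')^(d-1) * gj j x) ∂mA := by
        apply integral_mono_ae (hF_int.const_mul _) hsum_int'
        filter_upwards [haeKc] with x hx
        exact hpoint x hx
      rw [← hsum_eqint] at h2
      rw [integral_const_mul] at h2
      exact le_trans hκm h2

    set r1 := min (mm * δ / 2) (mm * (δ'/2)) with hr1def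
    have hr1pos : 0 < r1 := lt_min (by positivity) (by positivity)
    have hsand : ∀ r ∈ Set.Ioc (0:ℝ) r1,
        ((∑ j ∈ Finset.range (N+1),
            r^(d-1) * ∫ x in Metric.cthickening (r/(cj j + ε')) A, gj j x)
          ≤ ∫ z, g z ∂occApprox1 (φ '' A) d r) ∧
        (∫ z, g z ∂occApprox1 (φ '' A) d r
          ≤ ∑ j ∈ Finset.range (N+1),
            r^(d-1) * ∫ x in Metric.cthickening (r/(cj j - ε')) A, gj j x) := by
      intro r hr
      obtain ⟨hr0, hrr1⟩ := hr
      have hrδ : r ≤ mm * δ / 2 := le_trans hrr1 (min_le_left _ _)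
      have hrδ' : r ≤ mm * (δ'/2) := le_trans hrr1 (min_le_right _ _)
      have hrmm : r / mm ≤ δ'/2 := by
        rw [div_le_iff₀ hmm]
        linarith
      have hrmδ : r / mm ≤ δ := by
        rw [div_le_iff₀ hmm]
        nlinarith
      have hcl : ∀ j, 0 < cj j - ε' := fun j => by linarith [hcjm j]
      have hcl2 : ∀ j, 0 < cj j + ε' := fun j => by linarith [hcjm j]
      have hs1δ : ∀ j, r/(cj j - ε') ≤ δ := by
        intro j
        rw [div_le_iff₀ (hcl j)]
        nlinarith [hcjm j]
      have hs2mm : ∀ j, r/(cj j + ε') ≤ r/mm := by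
        intro j
        rw [div_le_div_iff₀ (hcl2 j) hmm]
        nlinarith [hcjm j]
      have hcompBr : ∀ j, IntegrableOn (gj j) (Br r) volume :=
        fun j => ((hgj_cont j).continuousOn).integrableOn_compact (hBr_comp r)
      have hcomp1 : ∀ j, IntegrableOn (gj j) (Metric.cthickening (r/(cj j - ε')) A) volume := by
        intro j
        apply ((hgj_cont j).continuousOn).integrableOn_compact
        exact IsCompact.of_isClosed_subset isCompact_Icc Metric.isClosed_cthickening
          (hsubKc (div_nonneg hr0.le (hcl j).le) (hs1δ j))
      have hcomp2 : ∀ j, IntegrableOn (gj j) (Metric.cthickening (r/(cj j + ε')) A) volume := by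
        intro j
        apply ((hgj_cont j).continuousOn).integrableOn_compact
        exact IsCompact.of_isClosed_subset isCompact_Icc Metric.isClosed_cthickening
          (hsubKc (div_nonneg hr0.le (hcl2 j).le) (le_trans (hs2mm j) hrmδ))
      -- support facts
      have hχsubgj : ∀ j x, gj j x ≠ 0 → χ j x ≠ 0 := by
        intro j x hne h
        apply hne
        simp only [hgjdef, h, zero_mul]
      have hpt : ∀ j, p (tj j) = cj j := fun j => rfl
      have hsubupper : ∀ j, ∀ x ∈ Br r, gj j x ≠ 0 →
          x ∈ Metric.cthickening (r/(cj j - ε')) A := by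
        intro j x hx hne
        obtain ⟨hxKc, a, haA, hfar⟩ := (hBr_mem hr0.le).1 hx
        have hχne := hχsubgj j x hne
        have hxt := hχsupp j x hχne
        have haKc := hAKc haA
        have hxa : |x - a| ≤ r/mm := by
          rw [le_div_iff₀ hmm]
          calc |x - a| * mm = mm * |x - a| := mul_comm _ _
            _ ≤ |φ x - φ a| := hbilip x hxKc a haKc
            _ ≤ r := hfar
        have hat' : |a - tj j| ≤ δ' := by
          have h3 : |a - tj j| ≤ |a - x| + |x - tj j| := abs_sub_le a x (tj j)
          rw [abs_sub_comm a x] at h3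
          linarith [hxt.le, hΔle]
        have hxt' : |x - tj j| ≤ δ' := by linarith [hxt.le, hΔle]
        obtain ⟨hlow2, _⟩ := hlocal (tj j) x a hxKc haKc hxt' hat'
        rw [hpt j] at hlow2
        have hxar : |x - a| ≤ r/(cj j - ε') := by
          rw [le_div_iff₀ (hcl j)]
          calc |x - a| * (cj j - ε') = (cj j - ε') * |x - a| := mul_comm _ _
            _ ≤ |φ x - φ a| := hlow2
            _ ≤ r := hfar
        exact (hmemA (div_nonneg hr0.le (hcl j).le)).2 ⟨a, haA, hxar⟩
      have hsublower : ∀ j, ∀ x ∈ Metric.cthickening (r/(cj j + ε')) A, gj j x ≠ 0 →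
          x ∈ Br r := by
        intro j x hx hne
        obtain ⟨a, haA, hxa⟩ := (hmemA (div_nonneg hr0.le (hcl2 j).le)).1 hx
        have hχne := hχsubgj j x hne
        have hxt := hχsupp j x hχne
        have hxa' : |x - a| ≤ r/mm := le_trans hxa (hs2mm j)
        have hxKc : x ∈ Icc lo hi :=
          hsubKc (div_nonneg hr0.le (hcl2 j).le) (le_trans (hs2mm j) hrmδ) hx
        have hat' : |a - tj j| ≤ δ' := by
          have h3 : |a - tj j| ≤ |a - x| + |x - tj j| := abs_sub_le a x (tj j)
          rw [abs_sub_comm a x] at h3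
          linarith [hxt.le, hΔle]
        have hxt' : |x - tj j| ≤ δ' := by linarith [hxt.le, hΔle]
        obtain ⟨_, hhigh2⟩ := hlocal (tj j) x a hxKc (hAKc haA) hxt' hat'
        rw [hpt j] at hhigh2
        have hfar : |φ x - φ a| ≤ r := by
          calc |φ x - φ a| ≤ (cj j + ε') * |x - a| := hhigh2
            _ ≤ (cj j + ε') * (r/(cj j + ε')) :=
                mul_le_mul_of_nonneg_left hxa (hcl2 j).le
            _ = r := by
                rw [mul_comm, div_mul_cancel₀ _ (ne_of_gt (hcl2 j))]
        exact (hBr_mem hr0.le).2 ⟨hxKc, a, haA, hfar⟩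
      -- change of variables
      have heqon : Set.EqOn (fun x => |deriv φ x| • (g (φ x) : ℝ))
          (fun x => ∑ j ∈ Finset.range (N+1), gj j x) (Br r) := by
        intro x hx
        have hxKc := ((hBr_mem hr0.le).1 hx).1
        have h1 : (∑ j ∈ Finset.range (N+1), gj j x) = deriv φ x * g (φ x) := by
          simp only [hgjdef]
          rw [← Finset.sum_mul, hχsum_eq x hxKc, one_mul, hGdef]
          simp only []
          rw [hpeq x hxKc, hΦeq x hxKc]
        show |deriv φ x| • (g (φ x) : ℝ) = ∑ j ∈ Finset.range (N+1), gj j x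
        rw [h1, smul_eq_mul, abs_of_pos (hφ' x (hKcI hxKc))]
      have hL : (∫ z, g z ∂occApprox1 (φ '' A) d r)
          = ∑ j ∈ Finset.range (N+1), r^(d-1) * ∫ x in Br r, gj j x := by
        unfold occApprox1
        rw [integral_smul_measure,
          ENNReal.toReal_ofReal (Real.rpow_nonneg hr0.le _), smul_eq_mul,
          himage hr0 (by linarith),
          integral_image_eq_integral_abs_deriv_smul (hBr_meas r)
            (fun x hx => (hder x (hKcI ((hBr_mem hr0.le).1 hx).1)).hasDerivWithinAt)
            (hinj.mono (fun x hx => hKcI ((hBr_mem hr0.le).1 hx).1)) g,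
          setIntegral_congr_fun (hBr_meas r) heqon,
          integral_finset_sum _ (fun j _ => hcompBr j),
          Finset.mul_sum]
      constructor
      · rw [hL]
        apply Finset.sum_le_sum
        intro j _
        apply mul_le_mul_of_nonneg_left ?_ (Real.rpow_nonneg hr0.le _)
        exact setIntegral_le_of_subset (Pi.le_def.2 (hgj0 j))
          Metric.isClosed_cthickening.measurableSet (hBr_meas r)
          (hsublower j) (hcomp2 j) (hcompBr j)
      · rw [hL]
        apply Finset.sum_le_sum
        intro j _
        apply mul_le_mul_of_nonneg_left ?_ (Real.rpow_nonneg hr0.le _)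
        exact setIntegral_le_of_subset (Pi.le_def.2 (hgj0 j))
          (hBr_meas r) Metric.isClosed_cthickening.measurableSet
          (hsubupper j) (hcompBr j) (hcomp1 j)
    filter_upwards [Metric.tendsto_nhds.1 hup (ε/4) (by linarith),
      Metric.tendsto_nhds.1 hdn (ε/4) (by linarith),
      Ioc_mem_nhdsGT_of_mem (⟨le_rfl, hr1pos⟩ : (0:ℝ) ∈ Ico 0 r1)] with r h1 h2 hr
    obtain ⟨hlow, hhigh⟩ := hsand r hr
    rw [Real.dist_eq] at h1 h2 ⊢
    rw [abs_lt] at h1 h2 ⊢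
    constructor
    · linarith [h2.1, hlow]
    · linarith [h1.2, hhigh]
  -- integrability of the target integrands
  have hFint : ∀ u : BoundedContinuousFunction ℝ ℝ,
      Integrable (fun x => p x ^ d * u (Φ x)) mA := by
    intro u
    apply integrable_of_bdd mA
      ((hp_cont.rpow_const (fun x => Or.inl (hp_pos x).ne')).mul
        (u.continuous.comp hΦ_cont)) (MM ^ d * ‖u‖)
    intro x
    rw [Pi.mul_apply, Function.comp_apply, abs_mul]
    apply mul_le_mul ?_ ?_ (abs_nonneg _) (Real.rpow_nonneg hMM.le d)
    · rw [abs_of_pos (Real.rpow_pos_of_pos (hp_pos x) d)]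
      exact Real.rpow_le_rpow (hp_pos x).le (hpM x) hd0.le
    · simpa [Real.norm_eq_abs] using u.norm_coe_le_norm (Φ x)
  -- integrability w.r.t. the approximating measures
  have hIntOcc : ∀ r : ℝ, 0 < r → ∀ u : BoundedContinuousFunction ℝ ℝ,
      Integrable (⇑u) (occApprox1 (φ '' A) d r) := by
    intro r hr u
    unfold occApprox1
    apply Integrable.smul_measure ?_ ENNReal.ofReal_ne_top
    have hbd1 : ∀ y ∈ φ '' A, sInf (φ '' A) ≤ y ∧ y ≤ sSup (φ '' A) := by
      intro y hy
      exact ⟨csInf_le hφAcomp.bddBelow hy, le_csSup hφAcomp.bddAbove hy⟩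
    have hsub2 : Metric.cthickening r (φ '' A)
        ⊆ Icc (sInf (φ '' A) - r) (sSup (φ '' A) + r) := by
      intro x hx
      obtain ⟨a, haA, hxa⟩ := (hmemφA hr.le).1 hx
      obtain ⟨hb1, hb2⟩ := hbd1 (φ a) ⟨a, haA, rfl⟩
      rw [abs_le] at hxa
      exact ⟨by linarith, by linarith⟩
    have hcomp : IsCompact (Metric.cthickening r (φ '' A)) :=
      IsCompact.of_isClosed_subset isCompact_Icc Metric.isClosed_cthickening hsub2
    exact u.continuous.continuousOn.integrableOn_compact hcomp
  -- conclusion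
  refine ⟨hmass_ne0, hmass_netop, ?_⟩
  intro f
  rw [hrepr f]
  set cf : BoundedContinuousFunction ℝ ℝ := BoundedContinuousFunction.const ℝ ‖f‖ with hcfdef
  set f₁ : BoundedContinuousFunction ℝ ℝ := f + cf with hf₁def
  have hfabs : ∀ x, |f x| ≤ ‖f‖ := fun x => by
    simpa [Real.norm_eq_abs] using f.norm_coe_le_norm x
  have hf₁0 : ∀ x, 0 ≤ (f₁ x : ℝ) := by
    intro x
    simp only [hf₁def, hcfdef, BoundedContinuousFunction.coe_add, Pi.add_apply,
      BoundedContinuousFunction.const_apply]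
    linarith [(abs_le.1 (hfabs x)).1]
  have hcf0 : ∀ x, 0 ≤ (cf x : ℝ) := fun x => by
    simp only [hcfdef, BoundedContinuousFunction.const_apply]
    exact norm_nonneg f
  have h1 := hkey f₁ hf₁0
  have h2 := hkey cf hcf0
  have h3 := h1.sub h2
  have hlim_eq : (∫ x, p x ^ d * f₁ (Φ x) ∂mA) - (∫ x, p x ^ d * cf (Φ x) ∂mA)
      = ∫ x, p x ^ d * f (Φ x) ∂mA := by
    rw [← integral_sub (hFint f₁) (hFint cf)]
    apply integral_congr_ae
    apply Filter.Eventually.of_forall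
    intro x
    simp only [hf₁def, hcfdef, BoundedContinuousFunction.coe_add, Pi.add_apply,
      BoundedContinuousFunction.const_apply]
    ring
  rw [← hlim_eq]
  apply Tendsto.congr' ?_ h3
  filter_upwards [self_mem_nhdsWithin] with r hr
  rw [← integral_sub (hIntOcc r hr f₁) (hIntOcc r hr cf)]
  apply integral_congr_ae
  apply Filter.Eventually.of_forall
  intro z
  simp only [hf₁def, hcfdef, BoundedContinuousFunction.coe_add, Pi.add_apply,
    BoundedContinuousFunction.const_apply]
  ring
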